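/- Let L be a positive compact self-adjoint operator on a separable Hilbert space with eigenvalues μ_i ≤ C i^{−c} for some c > 1 and C > 0. Then there exists c_b > 0 such that for all λ ∈ (0,1], the effective dimension satisfies N(λ) = Σ_i μ_i/(μ_i + λ) ≤ c_b λ^{−1/c}. -/

import Mathlib

open Filter Topology

private lemma aux_mvt (c : ℝ) (hc : 1 < c) {x : ℝ} (hx : 1 ≤ x) :
    (c - 1) * (x + 1) ^ (-c) ≤ x ^ (1 - c) - (x + 1) ^ (1 - c) := by
  have hx0 : (0:ℝ) < x := by linarith
  have hcont : ContinuousOn (fun t : ℝ => t ^ (1 - c)) (Set.Icc x (x + 1)) := by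
    intro t ht
    have ht0 : t ≠ 0 := ne_of_gt (lt_of_lt_of_le hx0 ht.1)
    exact (Real.continuousAt_rpow_const t _ (Or.inl ht0)).continuousWithinAt
  have hdiff : ∀ t ∈ Set.Ioo x (x + 1),
      HasDerivAt (fun t : ℝ => t ^ (1 - c)) ((1 - c) * t ^ (1 - c - 1)) t := by
    intro t ht
    exact Real.hasDerivAt_rpow_const (Or.inl (ne_of_gt (lt_trans hx0 ht.1)))
  obtain ⟨ξ, hξ, hd⟩ := exists_deriv_eq_slope (fun t : ℝ => t ^ (1 - c))
    (by linarith : x < x + 1) hcont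
    (fun t ht => (hdiff t ht).differentiableAt.differentiableWithinAt)
  have hξ0 : 0 < ξ := lt_trans hx0 hξ.1
  have hde : deriv (fun t : ℝ => t ^ (1 - c)) ξ = (1 - c) * ξ ^ (1 - c - 1) :=
    (hdiff ξ hξ).deriv
  rw [hde] at hd
  have hsub : x ^ (1 - c) - (x + 1) ^ (1 - c) = (c - 1) * ξ ^ (-c) := by
    have : (1 - c) * ξ ^ (1 - c - 1) = ((x + 1) ^ (1 - c) - x ^ (1 - c)) / 1 := by
      simpa using hd
    have h1 : (1 - c - 1) = -c := by ring
    rw [h1] at this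
    linarith [this]
  rw [hsub]
  have : (x + 1) ^ (-c) ≤ ξ ^ (-c) :=
    Real.rpow_le_rpow_of_nonpos hξ0 hξ.2.le (by linarith)
  exact mul_le_mul_of_nonneg_left this (by linarith)

private lemma aux_tail (c : ℝ) (hc : 1 < c) (n : ℕ) (hn : 1 ≤ n) :
    ∑' i : ℕ, ((i : ℝ) + n + 1) ^ (-c) ≤ (n : ℝ) ^ (1 - c) / (c - 1) := by
  have hn1 : (1:ℝ) ≤ (n:ℝ) := by exact_mod_cast hn
  set g : ℕ → ℝ := fun k => ((k : ℝ) + n) ^ (1 - c) with hg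
  have hgpos : ∀ k : ℕ, (0:ℝ) < (k : ℝ) + n := fun k => by
    have := Nat.cast_nonneg (α := ℝ) k; linarith
  have hmono : ∀ k, g (k + 1) ≤ g k := by
    intro k
    apply Real.rpow_le_rpow_of_nonpos (hgpos k) (by push_cast; linarith) (by linarith)
  -- telescoping sum
  have htend : Tendsto (fun N => g N) atTop (𝓝 0) := by
    have h1 : Tendsto (fun N : ℕ => (N : ℝ) + n) atTop atTop :=
      tendsto_atTop_add_const_right _ _ tendsto_natCast_atTop_atTop
    have h2 : Tendsto (fun x : ℝ => x ^ (-(c - 1))) atTop (𝓝 0) :=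
      tendsto_rpow_neg_atTop (by linarith)
    have := h2.comp h1
    simpa [hg, Function.comp_def, show -(c - 1) = 1 - c by ring] using this
  have htel : HasSum (fun i => g i - g (i + 1)) (g 0) := by
    rw [hasSum_iff_tendsto_nat_of_nonneg (fun i => by linarith [hmono i])]
    have : ∀ N : ℕ, ∑ i ∈ Finset.range N, (g i - g (i + 1)) = g 0 - g N := by
      intro N; exact Finset.sum_range_sub' g N
    simp only [this]
    simpa using tendsto_const_nhds.sub htend
  -- summability of the left side
  have hsum : Summable (fun i : ℕ => ((i : ℝ) + n + 1) ^ (-c)) := by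
    have h0 : Summable (fun k : ℕ => (k : ℝ) ^ (-c)) :=
      Real.summable_nat_rpow.2 (by linarith)
    have := (summable_nat_add_iff (f := fun k : ℕ => (k : ℝ) ^ (-c)) (n + 1)).2 h0
    apply this.congr
    intro i; push_cast; ring_nf
  -- pointwise bound
  have hpt : ∀ i : ℕ, (c - 1) * ((i : ℝ) + n + 1) ^ (-c) ≤ g i - g (i + 1) := by
    intro i
    have hx' : (1:ℝ) ≤ (i : ℝ) + n := by
      have := Nat.cast_nonneg (α := ℝ) i; linarith
    have h := aux_mvt c hc hx'
    have e1 : g (i + 1) = ((i : ℝ) + n + 1) ^ (1 - c) := by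
      simp only [hg]; congr 1; push_cast; ring
    have e0 : g i = ((i : ℝ) + n) ^ (1 - c) := rfl
    rw [e1, e0]
    exact h
  have hle : (c - 1) * ∑' i : ℕ, ((i : ℝ) + n + 1) ^ (-c) ≤ g 0 := by
    rw [← tsum_mul_left]
    calc ∑' i : ℕ, (c - 1) * ((i : ℝ) + n + 1) ^ (-c)
        ≤ ∑' i, (g i - g (i + 1)) := Summable.tsum_le_tsum hpt (hsum.mul_left _) htel.summable
      _ = g 0 := htel.tsum_eq
  have hg0 : g 0 = (n : ℝ) ^ (1 - c) := by simp [hg]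
  rw [le_div_iff₀ (by linarith : (0:ℝ) < c - 1)]
  rw [hg0] at hle; linarith

/-- If the eigenvalues of a positive compact self-adjoint operator decay polynomially,
`μ_i ≤ C i^{-c}` with `c > 1`, then there is `c_b > 0` with
`N(λ) = ∑ μ_i/(μ_i+λ) ≤ c_b λ^{-1/c}` for all `λ ∈ (0,1]`. -/
theorem effective_dimension_polynomial_decay
    (μ : ℕ → ℝ) (hpos : ∀ i, 0 ≤ μ i) (C c : ℝ) (hC : 0 < C) (hc : 1 < c)
    (hdecay : ∀ i : ℕ, μ i ≤ C * ((i : ℝ) + 1) ^ (-c)) :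
    ∃ cb > 0, ∀ lam ∈ Set.Ioc (0 : ℝ) 1,
      ∑' i, μ i / (μ i + lam) ≤ cb * lam ^ (-(1 / c)) := by
  refine ⟨2 + C / (c - 1), by have h1 : (0:ℝ) < c - 1 := (by linarith); positivity, ?_⟩
  rintro lam ⟨hlam0, hlam1⟩
  set x := lam ^ (-(1 / c)) with hxdef
  have hc0 : (0:ℝ) < c := by linarith
  have hx1 : 1 ≤ x :=
    Real.one_le_rpow_of_pos_of_le_one_of_nonpos hlam0 hlam1 (neg_nonpos.2 (one_div_nonneg.2 hc0.le))
  have hx0 : 0 < x := by linarith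
  set n := ⌈x⌉₊ with hndef
  have hn1 : 1 ≤ n := Nat.one_le_ceil_iff.2 hx0
  have hnx : x ≤ (n : ℝ) := Nat.le_ceil x
  have hnx2 : (n : ℝ) ≤ 2 * x := by
    have := Nat.ceil_lt_add_one (le_of_lt hx0)
    calc (n : ℝ) ≤ x + 1 := this.le
      _ ≤ 2 * x := by linarith
  set f : ℕ → ℝ := fun i => μ i / (μ i + lam) with hf
  have hden : ∀ i, 0 < μ i + lam := fun i => by have := hpos i; linarith
  have hf0 : ∀ i, 0 ≤ f i := fun i => div_nonneg (hpos i) (hden i).le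
  have hf1 : ∀ i, f i ≤ 1 := fun i =>
    (div_le_one (hden i)).2 (by linarith [hpos i])
  have hfb : ∀ i, f i ≤ C / lam * ((i : ℝ) + 1) ^ (-c) := by
    intro i
    have h1 : f i ≤ μ i / lam :=
      div_le_div_of_nonneg_left (hpos i) hlam0 (by linarith [hpos i])
    have h2 : μ i / lam ≤ C * ((i : ℝ) + 1) ^ (-c) / lam :=
      div_le_div_of_nonneg_right (hdecay i) hlam0.le
    calc f i ≤ C * ((i : ℝ) + 1) ^ (-c) / lam := h1.trans h2
      _ = C / lam * ((i : ℝ) + 1) ^ (-c) := by ring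
  have hSb : Summable (fun i : ℕ => ((i : ℝ) + 1) ^ (-c)) := by
    have h0 : Summable (fun k : ℕ => (k : ℝ) ^ (-c)) :=
      Real.summable_nat_rpow.2 (by linarith)
    have := (summable_nat_add_iff (f := fun k : ℕ => (k : ℝ) ^ (-c)) 1).2 h0
    apply this.congr; intro i; push_cast; ring_nf
  have hfs : Summable f := Summable.of_nonneg_of_le hf0 hfb (hSb.mul_left _)
  have hsplit := Summable.sum_add_tsum_nat_add (f := f) n hfs
  have hhead : ∑ i ∈ Finset.range n, f i ≤ (n : ℝ) := by
    calc ∑ i ∈ Finset.range n, f i ≤ ∑ i ∈ Finset.range n, 1 :=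
          Finset.sum_le_sum fun i _ => hf1 i
      _ = (n : ℝ) := by simp
  have hTsum : Summable (fun i : ℕ => ((i : ℝ) + n + 1) ^ (-c)) := by
    have h0 : Summable (fun k : ℕ => (k : ℝ) ^ (-c)) :=
      Real.summable_nat_rpow.2 (by linarith)
    have := (summable_nat_add_iff (f := fun k : ℕ => (k : ℝ) ^ (-c)) (n + 1)).2 h0
    apply this.congr; intro i; push_cast; ring_nf
  have htail : ∑' i : ℕ, f (i + n) ≤ C / lam * ((n : ℝ) ^ (1 - c) / (c - 1)) := by
    have hpt : ∀ i : ℕ, f (i + n) ≤ C / lam * ((i : ℝ) + n + 1) ^ (-c) := by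
      intro i
      have h := hfb (i + n)
      have e : ((i + n : ℕ) : ℝ) = (i : ℝ) + n := by push_cast; ring
      rw [e] at h
      exact h
    calc ∑' i : ℕ, f (i + n)
        ≤ ∑' i : ℕ, C / lam * ((i : ℝ) + n + 1) ^ (-c) :=
          Summable.tsum_le_tsum hpt ((summable_nat_add_iff n).2 hfs) (hTsum.mul_left _)
      _ = C / lam * ∑' i : ℕ, ((i : ℝ) + n + 1) ^ (-c) := tsum_mul_left
      _ ≤ C / lam * ((n : ℝ) ^ (1 - c) / (c - 1)) := by
          apply mul_le_mul_of_nonneg_left (aux_tail c hc n hn1) (by positivity)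
  -- key rpow computation
  have hxpow : (n : ℝ) ^ (1 - c) ≤ lam * x := by
    have h1 : (n : ℝ) ^ (1 - c) ≤ x ^ (1 - c) :=
      Real.rpow_le_rpow_of_nonpos hx0 hnx (by linarith)
    have h2 : x ^ (1 - c) = lam * x := by
      rw [hxdef, ← Real.rpow_mul hlam0.le]
      have hcne : c ≠ 0 := ne_of_gt hc0
      have he : -(1 / c) * (1 - c) = 1 + -(1 / c) := by field_simp; ring
      rw [he, Real.rpow_add hlam0, Real.rpow_one]
    linarith [h2 ▸ h1]
  have htail2 : ∑' i : ℕ, f (i + n) ≤ C / (c - 1) * x := by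
    have : C / lam * ((n : ℝ) ^ (1 - c) / (c - 1)) ≤ C / lam * (lam * x / (c - 1)) := by
      apply mul_le_mul_of_nonneg_left _ (by positivity)
      apply div_le_div_of_nonneg_right hxpow (by linarith : (0:ℝ) ≤ c - 1)
    have heq : C / lam * (lam * x / (c - 1)) = C / (c - 1) * x := by
      have hl : lam ≠ 0 := ne_of_gt hlam0
      have hc1 : c - 1 ≠ 0 := by intro h; linarith
      field_simp
    linarith [htail]
  calc ∑' i, f i = ∑ i ∈ Finset.range n, f i + ∑' i : ℕ, f (i + n) := hsplit.symm
    _ ≤ (n : ℝ) + C / (c - 1) * x := add_le_add hhead htail2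
    _ ≤ 2 * x + C / (c - 1) * x := by linarith
    _ = (2 + C / (c - 1)) * x := by ring
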